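/- Let $B, W$ be finite sets with $|B| = |W| = N \ge 1$, and let $\{W_\alpha\}_{\alpha \in A}$ be a partition of $W$ into nonempty blocks, with $n_\alpha = |W_\alpha|$. Let $\bar f : B \times W \to \mathbb{R}$ be nonnegative with $\sum_{y \in W} \bar f(x,y) = 1$ for all $x \in B$, and suppose $\bar f$ is constant on blocks in the second variable: $\bar f(x,y) = \bar f(x,y')$ whenever $y, y' \in W_\alpha$ for the same $\alpha$. Then $Z(\bar f) = \sum_{\sigma : B \to W \text{ bijection}} \prod_{x} \bar f(x,\sigma(x)) \le \prod_{\alpha \in A} \frac{n_\alpha!}{n_\alpha^{n_\alpha}}$. -/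
import Mathlib


open Finset

/-- The partition function: sum over bijections `σ : B ≃ W` of the product of weights. -/
noncomputable def Z {B W : Type*} [Fintype B] [Fintype W] [DecidableEq B] [DecidableEq W]
    (f : B → W → ℝ) : ℝ :=
  ∑ σ : B ≃ W, ∏ x, f x (σ x)

section Aux

variable {B W A : Type*} [Fintype B] [Fintype W] [Fintype A]
    [DecidableEq B] [DecidableEq W] [DecidableEq A]

/-- Restriction of a bijection `σ : B ≃ W` with `π ∘ σ = τ` to the fibers of `τ` and `π`. -/
def restrictEquiv (π : W → A) (τ : B → A) (σ : B ≃ W)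
    (hσ : ∀ x, π (σ x) = τ x) (α : A) : {x // τ x = α} ≃ {y // π y = α} where
  toFun x := ⟨σ x.1, by rw [hσ]; exact x.2⟩
  invFun y := ⟨σ.symm y.1, by
    have h1 := hσ (σ.symm y.1)
    rw [Equiv.apply_symm_apply] at h1
    rw [← h1]; exact y.2⟩
  left_inv x := by ext; simp
  right_inv y := by ext; simp

lemma fiber_card_le (π : W → A) (n : A → ℕ)
    (hn : ∀ α, n α = (univ.filter fun y => π y = α).card) (τ : B → A) :
    (univ.filter fun σ : B ≃ W => (fun x => π (σ x)) = τ).card ≤ ∏ α, (n α).factorial := by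
  rcases (univ.filter fun σ : B ≃ W => (fun x => π (σ x)) = τ).eq_empty_or_nonempty with
    he | ⟨σ₀, hσ₀⟩
  · simp [he]
  · rw [mem_filter] at hσ₀
    have hσ₀' : ∀ x, π (σ₀ x) = τ x := fun x => congrFun hσ₀.2 x
    have hcard : (univ.filter fun σ : B ≃ W => (fun x => π (σ x)) = τ).card
        = Fintype.card {σ : B ≃ W // (fun x => π (σ x)) = τ} := (Fintype.card_subtype _).symm
    rw [hcard]
    have hΦ : Function.Injective
        (fun σ : {σ : B ≃ W // (fun x => π (σ x)) = τ} =>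
          (fun α => restrictEquiv π τ σ.1 (fun x => congrFun σ.2 x) α :
            ∀ α, {x // τ x = α} ≃ {y // π y = α})) := by
      rintro ⟨σ₁, h₁⟩ ⟨σ₂, h₂⟩ hEq
      refine Subtype.ext (Equiv.ext fun x => ?_)
      have h3 := congrFun hEq (τ x)
      have h4 := congrArg (fun e : {x' // τ x' = τ x} ≃ {y // π y = τ x} =>
        (e ⟨x, rfl⟩ : {y // π y = τ x}).1) h3
      simpa [restrictEquiv] using h4
    calc Fintype.card {σ : B ≃ W // (fun x => π (σ x)) = τ}
        ≤ Fintype.card (∀ α, {x // τ x = α} ≃ {y // π y = α}) :=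
          Fintype.card_le_of_injective _ hΦ
      _ = ∏ α, (n α).factorial := by
          rw [Fintype.card_pi]
          refine Finset.prod_congr rfl fun α _ => ?_
          rw [Fintype.card_equiv (restrictEquiv π τ σ₀ hσ₀' α),
            Fintype.card_congr (restrictEquiv π τ σ₀ hσ₀' α), Fintype.card_subtype, hn]

end Aux

/-- Hilfsatz 2: if `f̄` is nonnegative, row-normalized, and constant on the blocks of a
partition of `W` (given by fibers of a surjection `π : W → A`) in the second variable,
then `Z f̄ ≤ ∏ α, n_α!/n_α^{n_α}` where `n_α` is the size of block `α`. -/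
theorem Z_block_bound {B W A : Type*} [Fintype B] [Fintype W] [Fintype A]
    [DecidableEq B] [DecidableEq W] [DecidableEq A]
    (N : ℕ) (hN : 1 ≤ N) (hB : Fintype.card B = N) (hW : Fintype.card W = N)
    (π : W → A) (hπ : Function.Surjective π)
    (n : A → ℕ) (hn : ∀ α, n α = (univ.filter fun y => π y = α).card)
    (fbar : B → W → ℝ) (hf : ∀ x y, 0 ≤ fbar x y)
    (hrow : ∀ x, ∑ y, fbar x y = 1)
    (hconst : ∀ x y y', π y = π y' → fbar x y = fbar x y') :
    Z fbar ≤ ∏ α, ((n α).factorial : ℝ) / ((n α : ℝ)) ^ (n α) := by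
  choose r hr using hπ
  set h : B → A → ℝ := fun x α => (n α : ℝ) * fbar x (r α) with hhdef
  have hfval : ∀ x y, fbar x y = fbar x (r (π y)) :=
    fun x y => hconst x y (r (π y)) (hr (π y)).symm
  have hnpos : ∀ α, 0 < n α := by
    intro α; rw [hn]
    exact card_pos.2 ⟨r α, mem_filter.2 ⟨mem_univ _, hr α⟩⟩
  have hhnonneg : ∀ x α, 0 ≤ h x α := fun x α =>
    mul_nonneg (by positivity) (hf _ _)
  have hblock : ∀ x α, ∑ y ∈ univ.filter (fun y => π y = α), fbar x y = h x α := by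
    intro x α
    calc ∑ y ∈ univ.filter (fun y => π y = α), fbar x y
        = ∑ _y ∈ univ.filter (fun y => π y = α), fbar x (r α) :=
          Finset.sum_congr rfl fun y hy =>
            hconst x y (r α) (by rw [(mem_filter.1 hy).2, hr])
      _ = h x α := by rw [sum_const, nsmul_eq_mul, ← hn]
  have hhrow : ∀ x, ∑ α, h x α = 1 := by
    intro x
    rw [← hrow x, ← Finset.sum_fiberwise univ π (fbar x)]
    exact Finset.sum_congr rfl fun α _ => (hblock x α).symm
  set D : ℝ := ∏ α, (n α : ℝ) ^ (n α) with hD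
  have hDpos : 0 < D :=
    prod_pos fun α _ => pow_pos (by exact_mod_cast hnpos α) _
  have hprodn : ∀ σ : B ≃ W, ∏ x, (n (π (σ x)) : ℝ) = D := by
    intro σ
    rw [Equiv.prod_comp σ (fun y => (n (π y) : ℝ)),
      ← Finset.prod_fiberwise univ π (fun y => (n (π y) : ℝ))]
    refine prod_congr rfl fun α _ => ?_
    calc ∏ y ∈ univ.filter (fun y => π y = α), (n (π y) : ℝ)
        = ∏ _y ∈ univ.filter (fun y => π y = α), (n α : ℝ) :=
          prod_congr rfl fun y hy => by rw [(mem_filter.1 hy).2]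
      _ = (n α : ℝ) ^ (n α) := by rw [prod_const, hn]
  have hterm : ∀ σ : B ≃ W, ∏ x, fbar x (σ x) = (∏ x, h x (π (σ x))) / D := by
    intro σ
    rw [eq_div_iff hDpos.ne', ← hprodn σ, ← prod_mul_distrib]
    refine prod_congr rfl fun x _ => ?_
    rw [hhdef]
    simp only
    rw [← hfval]
    ring
  have hsum1 : ∑ τ : B → A, ∏ x, h x (τ x) = 1 := by
    have := Finset.prod_univ_sum (fun _ : B => (univ : Finset A)) (fun x α => h x α)
    rw [Fintype.piFinset_univ] at this
    rw [← this]
    simp [hhrow]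
  have hkey : ∑ σ : B ≃ W, ∏ x, h x (π (σ x)) ≤ ∏ α, ((n α).factorial : ℝ) := by
    rw [← Finset.sum_fiberwise univ (fun σ : B ≃ W => (fun x => π (σ x)))
      (fun σ => ∏ x, h x (π (σ x)))]
    have step1 : ∀ τ : B → A,
        ∑ σ ∈ univ.filter (fun σ : B ≃ W => (fun x => π (σ x)) = τ), ∏ x, h x (π (σ x))
        = ((univ.filter (fun σ : B ≃ W => (fun x => π (σ x)) = τ)).card : ℝ)
            * ∏ x, h x (τ x) := by
      intro τ
      rw [Finset.sum_congr rfl (fun σ hσ => ?_), sum_const, nsmul_eq_mul]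
      rw [mem_filter] at hσ
      exact prod_congr rfl fun x _ => by rw [congrFun hσ.2 x]
    calc ∑ τ : B → A,
          ∑ σ ∈ univ.filter (fun σ : B ≃ W => (fun x => π (σ x)) = τ), ∏ x, h x (π (σ x))
        ≤ ∑ τ : B → A, (∏ α, ((n α).factorial : ℝ)) * ∏ x, h x (τ x) := by
          refine sum_le_sum fun τ _ => ?_
          rw [step1 τ]
          refine mul_le_mul_of_nonneg_right ?_ (prod_nonneg fun x _ => hhnonneg _ _)
          exact_mod_cast fiber_card_le π n hn τ
      _ = (∏ α, ((n α).factorial : ℝ)) * ∑ τ : B → A, ∏ x, h x (τ x) := by rw [← mul_sum]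
      _ = ∏ α, ((n α).factorial : ℝ) := by rw [hsum1, mul_one]
  calc Z fbar = (∑ σ : B ≃ W, ∏ x, h x (π (σ x))) / D := by
        rw [show Z fbar = ∑ σ : B ≃ W, ∏ x, fbar x (σ x) from rfl, Finset.sum_div]
        exact sum_congr rfl fun σ _ => hterm σ
    _ ≤ (∏ α, ((n α).factorial : ℝ)) / D := by gcongr
    _ = ∏ α, ((n α).factorial : ℝ) / ((n α : ℝ)) ^ (n α) := by
        rw [hD, ← prod_div_distrib]
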